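/- For the anti-Pell numbers (a = (1,2)), writing B^1_n = B_{2n-1} and B^2_n = B_{2n}, one has B^2_n = ⌊(A_n + 2)/3⌋ for all n ≥ 1. -/
import Mathlib


/-- `A` and `B` (indexed from 1) are complementary strictly increasing sequences
of positive integers: every positive integer lies in exactly one of their ranges. -/
def CompPair (A B : ℕ → ℕ) : Prop :=
  StrictMonoOn A (Set.Ici 1) ∧ StrictMonoOn B (Set.Ici 1) ∧
  (∀ n, 1 ≤ n → 1 ≤ A n) ∧ (∀ n, 1 ≤ n → 1 ≤ B n) ∧
  ∀ m, 1 ≤ m →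
    ((∃ n, 1 ≤ n ∧ A n = m) ∧ ¬(∃ n, 1 ≤ n ∧ B n = m)) ∨
    (¬(∃ n, 1 ≤ n ∧ A n = m) ∧ (∃ n, 1 ≤ n ∧ B n = m))

/-- `(A, B)` is the anti-recurrence pair for the positive linear form `a` of dimension `k`:
`A n = Σ_{j=1}^k a_j * B_{(n-1)k+j}` for all `n ≥ 1`. -/
def AntiRec (k : ℕ) (a : Fin k → ℕ) (A B : ℕ → ℕ) : Prop :=
  CompPair A B ∧
  ∀ n, 1 ≤ n → A n = ∑ j : Fin k, a j * B ((n - 1) * k + (j : ℕ) + 1)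

/-- For the anti-Pell numbers, B²_n = ⌊(A_n + 2)/3⌋. -/
theorem stmt5 (A B : ℕ → ℕ) (h : AntiRec 2 ![1, 2] A B) :
    ∀ n, 1 ≤ n → B (2 * n) = (A n + 2) / 3 := by
  obtain ⟨⟨hA, hB, hApos, hBpos, hcomp⟩, hrec⟩ := h
  have hform : ∀ n, 1 ≤ n → A n = B (2 * n - 1) + 2 * B (2 * n) := by
    intro n hn
    have h0 := hrec n hn
    rw [Fin.sum_univ_two] at h0
    simp only [Matrix.cons_val_zero, Matrix.cons_val_one, Matrix.head_cons,
      Fin.val_zero, Fin.val_one, one_mul] at h0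
    rw [show (n - 1) * 2 + 0 + 1 = 2 * n - 1 by omega] at h0
    rw [show 2 * n - 1 + 1 = 2 * n by omega] at h0
    omega
  -- A has gaps of at least 3
  have hgap : ∀ i j, 1 ≤ i → i < j → A i + 2 ≤ A j := by
    intro i j hi hij
    have h1 : B (2 * i - 1) < B (2 * j - 1) :=
      hB (by simp [Set.mem_Ici]; omega) (by simp [Set.mem_Ici]; omega) (by omega)
    have h2 : B (2 * i) < B (2 * j) :=
      hB (by simp [Set.mem_Ici]; omega) (by simp [Set.mem_Ici]; omega) (by omega)
    have := hform i hi
    have := hform j (by omega)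
    omega
  intro n hn
  have hlt : B (2 * n - 1) < B (2 * n) :=
    hB (by simp [Set.mem_Ici]; omega) (by simp [Set.mem_Ici]; omega) (by omega)
  -- m strictly between B(2n-1) and B(2n) is an A-value
  have hmid : ∀ m, B (2 * n - 1) < m → m < B (2 * n) → ∃ i, 1 ≤ i ∧ A i = m := by
    intro m hm1 hm2
    have hm0 : 1 ≤ m := by
      have := hBpos (2 * n - 1) (by omega); omega
    have hnotB : ¬ (∃ k, 1 ≤ k ∧ B k = m) := by
      rintro ⟨k, hk1, hkB⟩
      rcases le_or_gt k (2 * n - 1) with hk | hk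
      · have : B k ≤ B (2 * n - 1) := by
          rcases eq_or_lt_of_le hk with rfl | hk'
          · exact le_refl _
          · exact le_of_lt (hB (by simp [Set.mem_Ici]; omega)
              (by simp [Set.mem_Ici]; omega) hk')
        omega
      · have : B (2 * n) ≤ B k := by
          rcases eq_or_lt_of_le (show 2 * n ≤ k by omega) with rfl | hk'
          · exact le_refl _
          · exact le_of_lt (hB (by simp [Set.mem_Ici]; omega)
              (by simp [Set.mem_Ici]; omega) hk')
        omega
    rcases hcomp m hm0 with ⟨hAex, _⟩ | ⟨_, hBex⟩
    · exact hAex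
    · exact absurd hBex hnotB
  -- B(2n) ≤ B(2n-1) + 2
  have hle : B (2 * n) ≤ B (2 * n - 1) + 2 := by
    by_contra hcon
    push_neg at hcon
    obtain ⟨i, hi1, hi⟩ := hmid (B (2 * n - 1) + 1) (by omega) (by omega)
    obtain ⟨j, hj1, hj⟩ := hmid (B (2 * n - 1) + 2) (by omega) (by omega)
    have hij : i < j := by
      rcases lt_trichotomy i j with h' | h' | h'
      · exact h'
      · subst h'; omega
      · have := hA (by simp [Set.mem_Ici]; omega) (by simp [Set.mem_Ici]; omega) h'
        omega
    have := hgap i j hi1 hij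
    omega
  have := hform n hn
  omega
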